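/- Let (V,q) be a finite weighted graph satisfying CD(0,∞) with q(x,y) > 0 whenever x ∼ y, and let (u_t) solve ∂_t u_t = Δu_t + Γu_t with u_0 ≤ 0 and Γu_0 ≤ q_min/2. Then for all x, y ∈ V and t > 0: |√(−u_t(y)) − √(−u_t(x))| ≤ d(x,y)/√(2t·q_min). -/

import Mathlib

open Finset Real

/-- Graph Laplacian on a finite weighted graph. -/
noncomputable def glap {V : Type*} [Fintype V] (q : V → V → ℝ) (f : V → ℝ) (x : V) : ℝ :=
  ∑ y, q x y * (f y - f x)

/-- Carré du champ operator Γ(f,g). -/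
noncomputable def gGammaBil {V : Type*} [Fintype V] (q : V → V → ℝ) (f g : V → ℝ) (x : V) : ℝ :=
  (1 / 2) * ∑ y, q x y * (f y - f x) * (g y - g x)

/-- Carré du champ Γf = Γ(f,f). -/
noncomputable def gGamma {V : Type*} [Fintype V] (q : V → V → ℝ) (f : V → ℝ) (x : V) : ℝ :=
  gGammaBil q f f x

/-- Iterated carré du champ Γ₂f = (ΔΓf − 2Γ(f,Δf))/2. -/
noncomputable def gGammaTwo {V : Type*} [Fintype V] (q : V → V → ℝ) (f : V → ℝ) (x : V) : ℝ :=
  (glap q (gGamma q f) x - 2 * gGammaBil q f (glap q f) x) / 2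

/-- The underlying simple graph of a weighted graph: x ∼ y iff q(x,y) > 0 or q(y,x) > 0. -/
def graphOf {V : Type*} [Fintype V] (q : V → V → ℝ) : SimpleGraph V where
  Adj x y := x ≠ y ∧ (0 < q x y ∨ 0 < q y x)
  symm := ⟨fun x y h => ⟨h.1.symm, h.2.symm⟩⟩
  loopless := ⟨fun x h => h.1 rfl⟩


section auxiliary
variable {V : Type*} [Fintype V]

lemma gGamma_nonneg (q : V → V → ℝ) (hq : ∀ x y, 0 ≤ q x y) (f : V → ℝ) (x : V) :
    0 ≤ gGamma q f x := by
  unfold gGamma gGammaBil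
  apply mul_nonneg (by norm_num)
  exact Finset.sum_nonneg fun y _ => by nlinarith [hq x y, sq_nonneg (f y - f x)]

lemma single_le_two_gGamma (q : V → V → ℝ) (hq : ∀ x y, 0 ≤ q x y) (f : V → ℝ) (x y : V) :
    q x y * (f y - f x) * (f y - f x) ≤ 2 * gGamma q f x := by
  unfold gGamma gGammaBil
  have h : (2:ℝ) * (1 / 2 * ∑ z, q x z * (f z - f x) * (f z - f x))
      = ∑ z, q x z * (f z - f x) * (f z - f x) := by ring
  rw [h]
  exact Finset.single_le_sum (f := fun z => q x z * (f z - f x) * (f z - f x))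
    (fun z _ => by show (0:ℝ) ≤ q x z * (f z - f x) * (f z - f x)
                   nlinarith [hq x z, sq_nonneg (f z - f x)]) (Finset.mem_univ y)

/-- derivative of `t ↦ gGamma q (u t) x`. -/
lemma hasDerivWithinAt_gGamma (q : V → V → ℝ) (u : ℝ → V → ℝ) (D : V → ℝ) (x : V)
    {s : Set ℝ} {t : ℝ}
    (hD : ∀ y, HasDerivWithinAt (fun r => u r y) (D y) s t) :
    HasDerivWithinAt (fun r => gGamma q (u r) x) (2 * gGammaBil q (u t) D x) s t := by
  have h : HasDerivWithinAt (fun r => (1/2 : ℝ) * ∑ y, q x y * (u r y - u r x) * (u r y - u r x))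
      ((1/2 : ℝ) * ∑ y, q x y * (((D y - D x) * (u t y - u t x)) + (u t y - u t x) * (D y - D x)))
      s t := by
    apply HasDerivWithinAt.const_mul
    apply HasDerivWithinAt.fun_sum
    intro y _
    have h1 : HasDerivWithinAt (fun r => u r y - u r x) (D y - D x) s t := (hD y).sub (hD x)
    have h2 := (h1.mul h1).const_mul (q x y)
    simp only [mul_assoc]
    exact h2
  have heq : (2 : ℝ) * gGammaBil q (u t) D x
      = (1/2 : ℝ) * ∑ y, q x y * (((D y - D x) * (u t y - u t x)) + (u t y - u t x) * (D y - D x)) := by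
    unfold gGammaBil
    rw [Finset.mul_sum, Finset.mul_sum, Finset.mul_sum]
    apply Finset.sum_congr rfl
    intro y _
    ring
  rw [heq]
  exact h

/-- splitting of `gGammaBil` over a pointwise sum in the second argument -/
lemma gGammaBil_add (q : V → V → ℝ) (f A B : V → ℝ) (x : V) :
    gGammaBil q f (fun z => A z + B z) x = gGammaBil q f A x + gGammaBil q f B x := by
  unfold gGammaBil
  rw [← mul_add, ← Finset.sum_add_distrib]
  congr 1
  apply Finset.sum_congr rfl
  intro y _
  ring

lemma sum_identity_A (q : V → V → ℝ) (w G : V → ℝ) (x : V) :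
    glap q G x + 2 * gGammaBil q w G x
      = ∑ y, q x y * ((1 + (w y - w x)) * (G y - G x)) := by
  unfold glap gGammaBil
  rw [show (2:ℝ) * (1 / 2 * ∑ y, q x y * (w y - w x) * (G y - G x))
      = ∑ y, q x y * (w y - w x) * (G y - G x) from by ring, ← Finset.sum_add_distrib]
  exact Finset.sum_congr rfl fun y _ => by ring

lemma sum_identity_B (q : V → V → ℝ) (w : V → ℝ) (x : V) :
    2 * gGamma q w x + glap q w x
      = ∑ y, q x y * ((w y - w x) * (w y - w x) + (w y - w x)) := by
  unfold gGamma gGammaBil glap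
  rw [show (2:ℝ) * (1 / 2 * ∑ y, q x y * (w y - w x) * (w y - w x))
      = ∑ y, q x y * (w y - w x) * (w y - w x) from by ring, ← Finset.sum_add_distrib]
  exact Finset.sum_congr rfl fun y _ => by ring

lemma claimA_est (q : V → V → ℝ) (hq : ∀ x y, 0 ≤ q x y) (qmin : ℝ) (hqmin_pos : 0 < qmin)
    (hqmin : ∀ x y, 0 < q x y → qmin ≤ q x y)
    (hCD : ∀ f : V → ℝ, ∀ x, 0 ≤ gGammaTwo q f x)
    (w : V → ℝ) (x : V) (hmax : ∀ y, gGamma q w y ≤ gGamma q w x)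
    (C : ℝ) (hC : gGamma q w x ≤ C) (Qtot : ℝ) (hQ : ∀ z : V, (∑ y, q z y) ≤ Qtot)
    (hQ0 : 0 ≤ Qtot) :
    2 * gGammaBil q w (fun z => glap q w z + gGamma q w z) x
      ≤ (Qtot * ((2 / qmin) * C)) * max (gGamma q w x - qmin / 2) 0 := by
  rw [gGammaBil_add, mul_add]
  have hCD' : 2 * gGammaBil q w (glap q w) x ≤ glap q (gGamma q w) x := by
    have := hCD w x
    unfold gGammaTwo at this
    linarith
  have hg0 : 0 ≤ gGamma q w x := gGamma_nonneg q hq w x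
  have hterm : ∀ y : V, q x y * ((1 + (w y - w x)) * (gGamma q w y - gGamma q w x))
      ≤ q x y * ((2 / qmin) * gGamma q w x * max (gGamma q w x - qmin / 2) 0) := by
    intro y
    rcases eq_or_lt_of_le (hq x y) with hq0 | hqpos
    · rw [← hq0]; simp
    apply mul_le_mul_of_nonneg_left _ (hq x y)
    have hΓy0 : 0 ≤ gGamma q w y := gGamma_nonneg q hq w y
    have hΓyg : gGamma q w y ≤ gGamma q w x := hmax y
    have hδ2 : qmin * ((w y - w x) * (w y - w x)) ≤ 2 * gGamma q w x := by
      have h1 := single_le_two_gGamma q hq w x y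
      have h2 : qmin * ((w y - w x) * (w y - w x)) ≤ q x y * ((w y - w x) * (w y - w x)) :=
        mul_le_mul_of_nonneg_right (hqmin x y hqpos) (mul_self_nonneg _)
      calc qmin * ((w y - w x) * (w y - w x)) ≤ q x y * ((w y - w x) * (w y - w x)) := h2
        _ = q x y * (w y - w x) * (w y - w x) := by ring
        _ ≤ 2 * gGamma q w x := h1
    rcases le_or_gt 0 (1 + (w y - w x)) with h1δ | h1δ
    · have hL : (1 + (w y - w x)) * (gGamma q w y - gGamma q w x) ≤ 0 :=
        mul_nonpos_of_nonneg_of_nonpos h1δ (by linarith)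
      have hR : 0 ≤ (2 / qmin) * gGamma q w x * max (gGamma q w x - qmin / 2) 0 :=
        mul_nonneg (mul_nonneg (by positivity) hg0) (le_max_right _ _)
      exact le_trans hL hR
    · have hδlt : w y - w x < -1 := by linarith
      have hgc : qmin / 2 < gGamma q w x := by
        nlinarith [mul_nonneg hqmin_pos.le (sq_nonneg (1 + (w y - w x))),
          mul_neg_of_pos_of_neg hqmin_pos h1δ]
      rw [max_eq_left (by linarith)]
      rw [div_mul_eq_mul_div, div_mul_eq_mul_div, le_div_iff₀ hqmin_pos]
      have hA' : qmin * ((1 + (w y - w x)) * gGamma q w y) ≤ 0 :=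
        mul_nonpos_of_nonneg_of_nonpos hqmin_pos.le
          (mul_nonpos_of_nonpos_of_nonneg h1δ.le hΓy0)
      have hd1 : -(w y - w x) ≤ (w y - w x) * (w y - w x) := by
        nlinarith [mul_pos_of_neg_of_neg (show w y - w x < 0 by linarith) h1δ]
      have hd2 : qmin * (-(w y - w x)) * gGamma q w x ≤ 2 * gGamma q w x * gGamma q w x := by
        calc qmin * (-(w y - w x)) * gGamma q w x
            ≤ qmin * ((w y - w x) * (w y - w x)) * gGamma q w x := by
              apply mul_le_mul_of_nonneg_right _ hg0
              exact mul_le_mul_of_nonneg_left hd1 hqmin_pos.le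
          _ ≤ 2 * gGamma q w x * gGamma q w x :=
              mul_le_mul_of_nonneg_right hδ2 hg0
      nlinarith [hA', hd2]
  calc 2 * gGammaBil q w (glap q w) x + 2 * gGammaBil q w (gGamma q w) x
      ≤ glap q (gGamma q w) x + 2 * gGammaBil q w (gGamma q w) x := by linarith
    _ = ∑ y, q x y * ((1 + (w y - w x)) * (gGamma q w y - gGamma q w x)) :=
        sum_identity_A q w (gGamma q w) x
    _ ≤ ∑ _y : V, q x _y * ((2 / qmin) * gGamma q w x * max (gGamma q w x - qmin / 2) 0) :=
        Finset.sum_le_sum fun y _ => hterm y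
    _ = (∑ y, q x y) * ((2 / qmin) * gGamma q w x * max (gGamma q w x - qmin / 2) 0) := by
        rw [← Finset.sum_mul]
    _ ≤ Qtot * ((2 / qmin) * gGamma q w x * max (gGamma q w x - qmin / 2) 0) :=
        mul_le_mul_of_nonneg_right (hQ x)
          (mul_nonneg (mul_nonneg (by positivity) hg0) (le_max_right _ _))
    _ ≤ Qtot * ((2 / qmin) * C * max (gGamma q w x - qmin / 2) 0) := by
        apply mul_le_mul_of_nonneg_left _ hQ0
        exact mul_le_mul_of_nonneg_right
          (mul_le_mul_of_nonneg_left hC (by positivity)) (le_max_right _ _)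
    _ = (Qtot * ((2 / qmin) * C)) * max (gGamma q w x - qmin / 2) 0 := by ring

lemma claimB_est (q : V → V → ℝ) (hq : ∀ x y, 0 ≤ q x y) (qmin : ℝ) (hqmin_pos : 0 < qmin)
    (hqmin : ∀ x y, 0 < q x y → qmin ≤ q x y)
    (hCD : ∀ f : V → ℝ, ∀ x, 0 ≤ gGammaTwo q f x)
    (w : V → ℝ) (t : ℝ) (ht : 0 ≤ t) (x : V)
    (hmax : ∀ y, t * gGamma q w y + w y ≤ t * gGamma q w x + w x)
    (hA : gGamma q w x ≤ qmin / 2) :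
    gGamma q w x + t * (2 * gGammaBil q w (fun z => glap q w z + gGamma q w z) x)
      + (glap q w x + gGamma q w x) ≤ 0 := by
  rw [gGammaBil_add, mul_add]
  have hCD' : 2 * gGammaBil q w (glap q w) x ≤ glap q (gGamma q w) x := by
    have := hCD w x
    unfold gGammaTwo at this
    linarith
  have hCD'' : t * (2 * gGammaBil q w (glap q w) x) ≤ t * glap q (gGamma q w) x :=
    mul_le_mul_of_nonneg_left hCD' ht
  have main : 2 * gGamma q w x + glap q w x + (t * glap q (gGamma q w) x
      + t * (2 * gGammaBil q w (gGamma q w) x)) ≤ 0 := by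
    have hsum : 2 * gGamma q w x + glap q w x + (t * glap q (gGamma q w) x
        + t * (2 * gGammaBil q w (gGamma q w) x))
        = ∑ y, (q x y * ((w y - w x) * (w y - w x) + (w y - w x))
            + t * (q x y * ((1 + (w y - w x)) * (gGamma q w y - gGamma q w x)))) := by
      rw [show t * glap q (gGamma q w) x + t * (2 * gGammaBil q w (gGamma q w) x)
          = t * (glap q (gGamma q w) x + 2 * gGammaBil q w (gGamma q w) x) from by ring,
        sum_identity_B q w x, sum_identity_A q w (gGamma q w) x, Finset.mul_sum,
        ← Finset.sum_add_distrib]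
    rw [hsum]
    apply Finset.sum_nonpos
    intro y _
    rcases eq_or_lt_of_le (hq x y) with hq0 | hqpos
    · rw [← hq0]; simp
    have hfac : q x y * ((w y - w x) * (w y - w x) + (w y - w x))
        + t * (q x y * ((1 + (w y - w x)) * (gGamma q w y - gGamma q w x)))
        = q x y * (((w y - w x) * (w y - w x) + (w y - w x))
            + (1 + (w y - w x)) * (t * (gGamma q w y - gGamma q w x))) := by ring
    rw [hfac]
    apply mul_nonpos_of_nonneg_of_nonpos (hq x y)
    have hδ2 : qmin * ((w y - w x) * (w y - w x)) ≤ 2 * gGamma q w x := by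
      have h1 := single_le_two_gGamma q hq w x y
      have h2 : qmin * ((w y - w x) * (w y - w x)) ≤ q x y * ((w y - w x) * (w y - w x)) :=
        mul_le_mul_of_nonneg_right (hqmin x y hqpos) (mul_self_nonneg _)
      calc qmin * ((w y - w x) * (w y - w x)) ≤ q x y * ((w y - w x) * (w y - w x)) := h2
        _ = q x y * (w y - w x) * (w y - w x) := by ring
        _ ≤ 2 * gGamma q w x := h1
    have hδsq : (w y - w x) * (w y - w x) ≤ 1 := by
      have h3 : qmin * ((w y - w x) * (w y - w x)) ≤ qmin * 1 := by linarith
      exact le_of_mul_le_mul_left h3 hqmin_pos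
    have h1δ : 0 ≤ 1 + (w y - w x) := by nlinarith [sq_nonneg (1 + (w y - w x))]
    have hT : t * (gGamma q w y - gGamma q w x) ≤ -(w y - w x) := by
      have := hmax y
      nlinarith
    nlinarith [mul_le_mul_of_nonneg_left hT h1δ]
  linarith

lemma sqrt_est (a b k : ℝ) (ha : 0 ≤ a) (hk : 0 ≤ k)
    (h : (b - a) ^ 2 ≤ 4 * k ^ 2 * a) : Real.sqrt b - Real.sqrt a ≤ k := by
  rcases le_total b a with hba | hba
  · have := Real.sqrt_le_sqrt hba
    linarith
  · have hb : 0 ≤ b := le_trans ha hba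
    have hsa : Real.sqrt a ^ 2 = a := Real.sq_sqrt ha
    have hsa0 : 0 ≤ Real.sqrt a := Real.sqrt_nonneg a
    have h1 : b - a ≤ 2 * k * Real.sqrt a := by
      have h2 : (b - a) ^ 2 ≤ (2 * k * Real.sqrt a) ^ 2 := by
        rw [mul_pow, mul_pow, hsa]
        nlinarith
      have hnn : 0 ≤ 2 * k * Real.sqrt a := by positivity
      nlinarith
    have h3 : b ≤ (Real.sqrt a + k) ^ 2 := by
      rw [add_sq, hsa]
      nlinarith
    have h4 : Real.sqrt b ≤ Real.sqrt a + k := by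
      calc Real.sqrt b ≤ Real.sqrt ((Real.sqrt a + k) ^ 2) := Real.sqrt_le_sqrt h3
        _ = Real.sqrt a + k := Real.sqrt_sq (by positivity)
    linarith

/-- One-sided edge estimate from the Hamilton bound. -/
lemma edge_onesided (q : V → V → ℝ) (hq : ∀ x y, 0 ≤ q x y) (qmin : ℝ)
    (hqmin_pos : 0 < qmin) (hqmin : ∀ x y, 0 < q x y → qmin ≤ q x y)
    (w : V → ℝ) (t : ℝ) (ht : 0 < t)
    (hHam : ∀ z, t * gGamma q w z + w z ≤ 0)
    (x y : V) (hxy : 0 < q x y) :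
    Real.sqrt (-(w y)) - Real.sqrt (-(w x)) ≤ (Real.sqrt (2 * t * qmin))⁻¹ := by
  set k : ℝ := (Real.sqrt (2 * t * qmin))⁻¹ with hk
  have htq : 0 < 2 * t * qmin := by positivity
  have hks : Real.sqrt (2 * t * qmin) > 0 := Real.sqrt_pos.2 htq
  have hk0 : 0 ≤ k := le_of_lt (inv_pos.2 hks)
  have hk2 : k ^ 2 = (2 * t * qmin)⁻¹ := by
    rw [hk, ← Real.sqrt_inv]
    exact Real.sq_sqrt (by positivity)
  have hΓx : 0 ≤ gGamma q w x := gGamma_nonneg q hq w x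
  have hax : 0 ≤ -(w x) := by
    have := hHam x
    nlinarith
  have hΓ : t * gGamma q w x ≤ -(w x) := by have := hHam x; linarith
  have hδ : qmin * ((w y - w x) * (w y - w x)) ≤ 2 * gGamma q w x := by
    have h1 := single_le_two_gGamma q hq w x y
    have h2 : qmin * ((w y - w x) * (w y - w x)) ≤ q x y * ((w y - w x) * (w y - w x)) :=
      mul_le_mul_of_nonneg_right (hqmin x y hxy) (mul_self_nonneg _)
    calc qmin * ((w y - w x) * (w y - w x)) ≤ q x y * ((w y - w x) * (w y - w x)) := h2
      _ = q x y * (w y - w x) * (w y - w x) := by ring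
      _ ≤ 2 * gGamma q w x := h1
  apply sqrt_est _ _ k hax hk0
  -- (-(w y) - -(w x))^2 ≤ 4 k^2 (-(w x))
  have key : t * qmin * ((w y - w x) * (w y - w x)) ≤ 2 * (-(w x)) := by
    nlinarith [mul_le_mul_of_nonneg_left hδ ht.le]
  have h4k : 4 * k ^ 2 * (-(w x)) = 2 * (-(w x)) / (t * qmin) := by
    rw [hk2]
    field_simp
    ring
  rw [h4k, le_div_iff₀ (by positivity)]
  nlinarith [key]

end auxiliary

open Set Filter in
lemma aux_max_ineq (a b c : ℝ) : max (a - c) 0 ≤ max (b - c) 0 + max (a - b) 0 := by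
  have h1 := le_max_left (b - c) (0:ℝ)
  have h2 := le_max_left (a - b) (0:ℝ)
  have h3 := le_max_right (b - c) (0:ℝ)
  have h4 := le_max_right (a - b) (0:ℝ)
  exact max_le (by linarith) (by linarith)

lemma maxPrinciple {V : Type*} [Fintype V] [Nonempty V] (f f' : ℝ → V → ℝ) (b : ℝ)
    (hf : ∀ t ∈ Set.Icc (0:ℝ) b, ∀ x, HasDerivWithinAt (fun s => f s x) (f' t x) (Set.Ici 0) t)
    (c L : ℝ) (hL : 0 ≤ L)
    (hder : ∀ t ∈ Set.Ico (0:ℝ) b, ∀ x, (∀ y, f t y ≤ f t x) → f' t x ≤ L * max (f t x - c) 0)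
    (h0 : ∀ x, f 0 x ≤ c) :
    ∀ t ∈ Set.Icc (0:ℝ) b, ∀ x, f t x ≤ c := by
  have hne : (Finset.univ : Finset V).Nonempty := Finset.univ_nonempty
  set M : ℝ → ℝ := fun t => Finset.univ.sup' hne (f t) with hM
  set g : ℝ → ℝ := fun t => max (M t - c) 0 with hg
  have hcont : ∀ x, ContinuousOn (fun s => f s x) (Set.Icc 0 b) := fun x s hs =>
    ((hf s hs x).continuousWithinAt).mono (fun z hz => hz.1)
  have hMcont : ContinuousOn M (Set.Icc 0 b) :=
    ContinuousOn.finset_sup'_apply hne (fun x _ => hcont x)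
  have hgcont : ContinuousOn g (Set.Icc 0 b) :=
    fun s hs => ((hMcont s hs).sub continuousWithinAt_const).max continuousWithinAt_const
  have hgnn : ∀ t, 0 ≤ g t := fun t => le_max_right _ _
  have key := le_gronwallBound_of_liminf_deriv_right_le (f := g)
      (f' := fun t => L * g t) (δ := 0) (K := L) (ε := 0) (a := 0) (b := b) hgcont ?_ ?_ ?_
  · intro t ht x
    have h1 := key t ht
    rw [gronwallBound_ε0] at h1
    have h2 : f t x ≤ M t := Finset.le_sup' (f t) (Finset.mem_univ x)
    have h3 : M t - c ≤ g t := le_max_left _ _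
    simp only [zero_mul] at h1
    linarith
  · -- liminf slope condition
    intro t ht r hr
    have ht0 : (0:ℝ) ≤ t := ht.1
    have hrpos : 0 < r := lt_of_le_of_lt (mul_nonneg hL (hgnn t)) hr
    have hIoi : Set.Ioi t ⊆ Set.Ici (0:ℝ) := fun z hz => le_trans ht0 (le_of_lt hz)
    have hev : ∀ x : V, ∀ᶠ z in nhdsWithin t (Set.Ioi t),
        (z - t)⁻¹ * (f z x - M t) < r := by
      intro x
      by_cases hx : f t x = M t
      · have hmax : ∀ y, f t y ≤ f t x := fun y =>
          hx ▸ Finset.le_sup' (f t) (Finset.mem_univ y)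
        have hd : f' t x < r := by
          have := hder t ht x hmax
          have hgt : max (f t x - c) 0 = g t := by rw [hx]
          rw [hgt] at this
          exact lt_of_le_of_lt this hr
        have hD : HasDerivWithinAt (fun s => f s x) (f' t x) (Set.Ioi t) t :=
          (hf t ⟨ht.1, ht.2.le⟩ x).mono hIoi
        have hslope := hasDerivWithinAt_iff_tendsto_slope.1 hD
        rw [Set.diff_singleton_eq_self (Set.notMem_Ioi_self)] at hslope
        have := hslope.eventually_lt_const hd
        filter_upwards [this, self_mem_nhdsWithin] with z hz hzt
        have : slope (fun s => f s x) t z = (z - t)⁻¹ * (f z x - f t x) := by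
          rw [slope_def_field]; ring
        rw [this, hx] at hz
        exact hz
      · have hle : f t x ≤ M t := Finset.le_sup' (f t) (Finset.mem_univ x)
        have hlt : f t x < M t := lt_of_le_of_ne hle hx
        have hcx : ContinuousWithinAt (fun s => f s x) (Set.Ioi t) t :=
          ((hf t ⟨ht.1, ht.2.le⟩ x).continuousWithinAt).mono hIoi
        have hev2 : ∀ᶠ z in nhdsWithin t (Set.Ioi t), f z x < M t :=
          hcx.eventually_lt_const hlt
        filter_upwards [hev2, self_mem_nhdsWithin] with z hz hzt
        rw [Set.mem_Ioi] at hzt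
        have hpos : 0 < (z - t)⁻¹ := inv_pos.2 (by linarith)
        have : (z - t)⁻¹ * (f z x - M t) < 0 :=
          mul_neg_of_pos_of_neg hpos (by linarith)
        linarith
    apply Filter.Eventually.frequently
    filter_upwards [Filter.eventually_all.2 hev, self_mem_nhdsWithin] with z hz hzt
    obtain ⟨x0, -, hx0⟩ := Finset.exists_mem_eq_sup' hne (f z)
    have h1 : g z - g t ≤ max (M z - M t) 0 := by
      have := aux_max_ineq (M z) (M t) c
      simp only [hg]
      linarith
    rw [Set.mem_Ioi] at hzt
    have hpos : 0 ≤ (z - t)⁻¹ := le_of_lt (inv_pos.2 (by linarith))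
    calc (z - t)⁻¹ * (g z - g t) ≤ (z - t)⁻¹ * max (M z - M t) 0 :=
          mul_le_mul_of_nonneg_left h1 hpos
      _ = max ((z - t)⁻¹ * (M z - M t)) ((z - t)⁻¹ * 0) := (mul_max_of_nonneg _ _ hpos)
      _ < r := by
          rw [mul_zero]
          apply max_lt _ hrpos
          have : M z = f z x0 := hx0
          rw [this]
          exact hz x0
  · -- g 0 ≤ 0
    have : M 0 ≤ c := Finset.sup'_le hne (f 0) (fun x _ => h0 x)
    exact max_le (by linarith) le_rfl
  · intro t _
    simp

/-- Hamilton-Harnack inequality under CD(0,∞):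
|√(−u_t(y)) − √(−u_t(x))| ≤ d(x,y)/√(2t·q_min). -/
theorem hamilton_harnack_CD_zero_infty {V : Type*} [Fintype V] (q : V → V → ℝ)
    (hq : ∀ x y, 0 ≤ q x y) (hdiag : ∀ x, q x x = 0) (qmin : ℝ)
    (hqmin_pos : 0 < qmin) (hqmin : ∀ x y, 0 < q x y → qmin ≤ q x y)
    (hsymm : ∀ x y, 0 < q x y → 0 < q y x)
    (hconn : (graphOf q).Connected)
    (hCD : ∀ f : V → ℝ, ∀ x, 0 ≤ gGammaTwo q f x)
    (u : ℝ → V → ℝ)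
    (hu : ∀ t ∈ Set.Ici (0 : ℝ), ∀ x, HasDerivWithinAt (fun s => u s x)
      (glap q (u t) x + gGamma q (u t) x) (Set.Ici 0) t)
    (hneg : ∀ x, u 0 x ≤ 0)
    (h0 : ∀ x, gGamma q (u 0) x ≤ qmin / 2) :
    ∀ x y : V, ∀ t : ℝ, 0 < t →
      |Real.sqrt (-(u t y)) - Real.sqrt (-(u t x))|
        ≤ ((graphOf q).dist x y : ℝ) / Real.sqrt (2 * t * qmin) := by
  intro x y t ht
  haveI : Nonempty V := hconn.nonempty
  -- derivative of s ↦ Γ(u s)(z)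
  have hΓd : ∀ s ∈ Set.Icc (0:ℝ) t, ∀ z : V,
      HasDerivWithinAt (fun r => gGamma q (u r) z)
        (2 * gGammaBil q (u s) (fun zz => glap q (u s) zz + gGamma q (u s) zz) z)
        (Set.Ici 0) s :=
    fun s hs z => hasDerivWithinAt_gGamma q u _ z (fun yy => hu s hs.1 yy)
  -- uniform bound for Γ on the compact time interval
  have hcontΓ : ∀ z : V, ContinuousOn (fun s => gGamma q (u s) z) (Set.Icc 0 t) :=
    fun z s hs => ((hΓd s hs z).continuousWithinAt).mono (fun r hr => hr.1)
  have hbdd : ∀ z : V, ∃ Cz : ℝ, ∀ s ∈ Set.Icc (0:ℝ) t, gGamma q (u s) z ≤ Cz := by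
    intro z
    obtain ⟨Cz, hCz⟩ := (isCompact_Icc (a := (0:ℝ)) (b := t)).exists_bound_of_continuousOn
      (hcontΓ z)
    exact ⟨Cz, fun s hs => (le_abs_self _).trans
      (by simpa [Real.norm_eq_abs] using hCz s hs)⟩
  choose Cf hCf using hbdd
  set C : ℝ := max (Finset.univ.sup' Finset.univ_nonempty Cf) 0 with hCdef
  have hC0 : 0 ≤ C := le_max_right _ _
  have hCb : ∀ s ∈ Set.Icc (0:ℝ) t, ∀ z, gGamma q (u s) z ≤ C := fun s hs z =>
    (hCf z s hs).trans ((Finset.le_sup' Cf (Finset.mem_univ z)).trans (le_max_left _ _))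
  set Qtot : ℝ := max (Finset.univ.sup' Finset.univ_nonempty (fun z => ∑ yy, q z yy)) 0
    with hQdef
  have hQ : ∀ z : V, (∑ yy, q z yy) ≤ Qtot := fun z =>
    (Finset.le_sup' (fun z => ∑ yy, q z yy) (Finset.mem_univ z)).trans (le_max_left _ _)
  have hQ0 : 0 ≤ Qtot := le_max_right _ _
  -- Claim A: Γ(u s) ≤ qmin / 2 on [0, t]
  have claimA : ∀ s ∈ Set.Icc (0:ℝ) t, ∀ z, gGamma q (u s) z ≤ qmin / 2 := by
    apply maxPrinciple (f := fun s z => gGamma q (u s) z)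
      (f' := fun s z => 2 * gGammaBil q (u s)
        (fun zz => glap q (u s) zz + gGamma q (u s) zz) z)
      t hΓd (qmin / 2) (Qtot * ((2 / qmin) * C))
      (mul_nonneg hQ0 (mul_nonneg (by positivity) hC0))
    · intro s hs z hmax
      exact claimA_est q hq qmin hqmin_pos hqmin hCD (u s) z hmax C
        (hCb s (Set.Ico_subset_Icc_self hs) z) Qtot hQ hQ0
    · exact h0
  -- Claim B: Hamilton estimate  s·Γ(u s) + u s ≤ 0 on [0, t]
  have claimB : ∀ s ∈ Set.Icc (0:ℝ) t, ∀ z,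
      s * gGamma q (u s) z + u s z ≤ 0 := by
    apply maxPrinciple (f := fun s z => s * gGamma q (u s) z + u s z)
      (f' := fun s z => gGamma q (u s) z + s * (2 * gGammaBil q (u s)
        (fun zz => glap q (u s) zz + gGamma q (u s) zz) z)
        + (glap q (u s) z + gGamma q (u s) z))
      t ?_ 0 0 le_rfl ?_ ?_
    · intro s hs z
      have hid : HasDerivWithinAt (fun r : ℝ => r) 1 (Set.Ici 0) s :=
        hasDerivWithinAt_id s _
      have hd : HasDerivWithinAt (fun r => r * gGamma q (u r) z + u r z)
          (1 * gGamma q (u s) z + s * (2 * gGammaBil q (u s)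
            (fun zz => glap q (u s) zz + gGamma q (u s) zz) z)
            + (glap q (u s) z + gGamma q (u s) z)) (Set.Ici 0) s :=
        (hid.fun_mul (hΓd s hs z)).fun_add (hu s hs.1 z)
      convert hd using 1
      ring
    · intro s hs z hmax
      rw [zero_mul]
      exact claimB_est q hq qmin hqmin_pos hqmin hCD (u s) s hs.1 z hmax
        (claimA s (Set.Ico_subset_Icc_self hs) z)
    · intro z
      simpa using hneg z
  have hHam : ∀ z, t * gGamma q (u t) z + u t z ≤ 0 :=
    fun z => claimB t ⟨ht.le, le_rfl⟩ z
  -- edge estimate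
  have hedge : ∀ x' y' : V, (graphOf q).Adj x' y' →
      |Real.sqrt (-(u t y')) - Real.sqrt (-(u t x'))|
        ≤ (Real.sqrt (2 * t * qmin))⁻¹ := by
    intro x' y' hadj
    have hq1 : 0 < q x' y' := by
      rcases (show x' ≠ y' ∧ (0 < q x' y' ∨ 0 < q y' x') from hadj).2 with h | h
      · exact h
      · exact hsymm _ _ h
    have hq2 : 0 < q y' x' := hsymm _ _ hq1
    rw [abs_sub_le_iff]
    exact ⟨edge_onesided q hq qmin hqmin_pos hqmin (u t) t ht hHam x' y' hq1,
      edge_onesided q hq qmin hqmin_pos hqmin (u t) t ht hHam y' x' hq2⟩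
  -- along a walk
  have hwalk : ∀ (a c : V) (p : (graphOf q).Walk a c),
      |Real.sqrt (-(u t c)) - Real.sqrt (-(u t a))|
        ≤ (p.length : ℝ) * (Real.sqrt (2 * t * qmin))⁻¹ := by
    intro a c p
    induction p with
    | nil => simp
    | @cons a' m' c' hadj p ih =>
      rw [SimpleGraph.Walk.length_cons]
      push_cast
      calc |Real.sqrt (-(u t c')) - Real.sqrt (-(u t a'))|
          ≤ |Real.sqrt (-(u t c')) - Real.sqrt (-(u t m'))|
            + |Real.sqrt (-(u t m')) - Real.sqrt (-(u t a'))| := abs_sub_le _ _ _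
        _ ≤ (p.length : ℝ) * (Real.sqrt (2 * t * qmin))⁻¹
            + (Real.sqrt (2 * t * qmin))⁻¹ := add_le_add ih (hedge a' m' hadj)
        _ = ((p.length : ℝ) + 1) * (Real.sqrt (2 * t * qmin))⁻¹ := by ring
  obtain ⟨p, hp⟩ := hconn.exists_walk_length_eq_dist x y
  have hfin := hwalk x y p
  rw [hp] at hfin
  rw [div_eq_mul_inv]
  exact hfin
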